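/- arXiv:math/9807117 — 8 statements merged into one kernel-verified Lean document; each statement's English description precedes it below -/
import Mathlib

section
/- Let G be a group and let ℤ = ⟨x⟩ be the infinite cyclic group. In the regular wreath product G ≀ ℤ, for every element φ of the base group G^ℤ there exists ψ ∈ G^ℤ such that φ = [ψ, x] (the commutator of ψ with the generator x). -/
/-- The translation action of `B` on the base group `B → G` of the regular wreath product. -/
def wrAut (G B : Type*) [Group G] [Group B] : B →* MulAut (B → G) where
  toFun b :=
    { toFun := fun f x => f (x * b)
      invFun := fun f x => f (x * b⁻¹)
      left_inv := fun f => by funext x; simp [mul_assoc]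
      right_inv := fun f => by funext x; simp [mul_assoc]
      map_mul' := fun f g => rfl }
  map_one' := by ext f x; simp
  map_mul' := fun a b => by ext f x; simp [mul_assoc]

/-- The regular wreath product `G ≀ B`. -/
abbrev Wr (G B : Type*) [Group G] [Group B] : Type _ :=
  SemidirectProduct (B → G) B (wrAut G B)

/-- The infinite cyclic group, written multiplicatively. -/
abbrev Zm : Type := Multiplicative ℤ

/-- The generator  of the infinite cyclic group. -/
abbrev zGen : Zm := Multiplicative.ofAdd 1

section Aux
variable {G : Type*} [Group G]

def psiP (φ : ℤ → G) : ℕ → G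
  | 0 => 1
  | n+1 => psiP φ n * (φ (n+1))⁻¹

def psiQ (φ : ℤ → G) : ℕ → G
  | 0 => φ 0
  | m+1 => psiQ φ m * φ (-(m+1))

def psi (φ : ℤ → G) : ℤ → G
  | Int.ofNat n => psiP φ n
  | Int.negSucc m => psiQ φ m

lemma psi_step (φ : ℤ → G) (k : ℤ) : psi φ (k - 1) = psi φ k * φ k := by
  match k with
  | Int.ofNat 0 =>
      have h : (Int.ofNat 0 : ℤ) - 1 = Int.negSucc 0 := by decide
      rw [h]
      show psiQ φ 0 = psi φ (Int.ofNat 0) * φ (Int.ofNat 0)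
      simp [psi, psiP, psiQ]
  | Int.ofNat (n+1) =>
      have h : (Int.ofNat (n+1)) - 1 = Int.ofNat n := by
        simp
      rw [h]
      show psiP φ n = psiP φ (n+1) * φ (Int.ofNat (n+1))
      have h2 : (Int.ofNat (n+1) : ℤ) = ((n:ℤ)+1) := by simp
      rw [h2]
      simp [psiP, mul_assoc]
  | Int.negSucc m =>
      have h : (Int.negSucc m) - 1 = Int.negSucc (m+1) := by
        rw [Int.negSucc_eq, Int.negSucc_eq]; push_cast; ring
      rw [h]
      show psiQ φ (m+1) = psiQ φ m * φ (Int.negSucc m)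
      have h2 : Int.negSucc m = -((m:ℤ)+1) := by rw [Int.negSucc_eq]
      rw [h2]
      simp [psiQ]

end Aux

open SemidirectProduct in
/-- In , every element  of the base group  is the commutator
 of some element  of the base group with the generator  of . -/
theorem stmt_0 (G : Type*) [Group G] (φ : Zm → G) :
    ∃ ψ : Zm → G,
      (inl φ : Wr G Zm) = (inl ψ)⁻¹ * (inr zGen)⁻¹ * inl ψ * inr zGen := by
  refine ⟨fun n => psi φ (Multiplicative.toAdd n), ?_⟩
  ext n
  · simp
    have h := psi_step φ (Multiplicative.toAdd n)
    show φ n = (psi φ (Multiplicative.toAdd n))⁻¹ * psi φ (Multiplicative.toAdd n + -1)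
    rw [show Multiplicative.toAdd n + -1 = Multiplicative.toAdd n - 1 from by ring, h]
    group
    rfl
  · simp
end

section
/- Let G be a group and let ℤ be the infinite cyclic group. The commutator subgroup of the regular wreath product G ≀ ℤ equals the base group G^ℤ. -/
section aux

variable {G : Type*} [Group G]

def wA (φ : ℤ → G) (m : ℕ) : G := ((List.range m).map (fun i => (φ ((i : ℤ) + 1))⁻¹)).prod

def wB (φ : ℤ → G) (m : ℕ) : G := ((List.range m).map (fun i => φ (-(i : ℤ)))).prod

lemma wA_succ (φ : ℤ → G) (m : ℕ) : wA φ (m + 1) = wA φ m * (φ ((m : ℤ) + 1))⁻¹ := by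
  simp [wA, List.range_succ]

lemma wB_succ (φ : ℤ → G) (m : ℕ) : wB φ (m + 1) = wB φ m * φ (-(m : ℤ)) := by
  simp [wB, List.range_succ]

/-- Auxiliary "partial product" solving the telescoping equation. -/
def wAux (φ : ℤ → G) : ℤ → G := fun n =>
  if 0 ≤ n then wA φ n.toNat else wB φ (-n).toNat

lemma wAux_key (φ : ℤ → G) (n : ℤ) : wAux φ (n - 1) = wAux φ n * φ n := by
  rcases n with m | m
  · rcases m with _ | m
    · -- n = 0
      show wAux φ (-1) = wAux φ 0 * φ 0
      have h1 : ¬ (0:ℤ) ≤ -1 := by omega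
      simp only [wAux, if_neg h1]
      norm_num [wA, wB, List.range_succ]
    · -- n = m+1
      have h1 : (Int.ofNat (m + 1)) - 1 = (m : ℤ) := by simp [Int.ofNat_eq_coe]; try (push_cast; ring)
      have h2 : (0:ℤ) ≤ (m : ℤ) := by positivity
      have h3 : (0:ℤ) ≤ Int.ofNat (m + 1) := by simp [Int.ofNat_eq_coe]; positivity
      rw [h1]
      simp only [wAux, if_pos h2, if_pos h3]
      have h4 : (Int.ofNat (m + 1)).toNat = m + 1 := rfl
      have h5 : ((m : ℤ)).toNat = m := rfl
      rw [h4, h5, wA_succ]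
      have h6 : ((m : ℤ) + 1) = Int.ofNat (m + 1) := by simp [Int.ofNat_eq_coe]
      rw [h6, mul_assoc, inv_mul_cancel, mul_one]
  · -- n = -(m+1)
    have h1 : (Int.negSucc m) - 1 = Int.negSucc (m + 1) := by
      simp only [Int.negSucc_eq]; push_cast; ring
    have h2 : ¬ (0:ℤ) ≤ Int.negSucc m := by simp only [Int.negSucc_eq]; push_cast; omega
    have h3 : ¬ (0:ℤ) ≤ Int.negSucc (m + 1) := by simp only [Int.negSucc_eq]; push_cast; omega
    rw [h1]
    simp only [wAux, if_neg h2, if_neg h3]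
    have h4 : (-(Int.negSucc (m + 1))).toNat = (m + 1) + 1 := rfl
    have h5 : (-(Int.negSucc m)).toNat = m + 1 := rfl
    rw [h4, h5, wB_succ]
    congr 1 <;> (simp only [Int.negSucc_eq]; push_cast; try ring)

end aux

open scoped commutatorElement

open SemidirectProduct in
/-- The commutator subgroup of the regular wreath product of a group with the infinite
cyclic group equals the base group. -/
theorem stmt_1 (G : Type*) [Group G] :
    commutator (Wr G Zm) =
      (inl : (Zm → G) →* Wr G Zm).range := by
  apply le_antisymm
  · rw [commutator_def, range_inl_eq_ker_rightHom]
    rw [Subgroup.commutator_le]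
    intro a _ b _
    have : rightHom ⁅a, b⁆ = ⁅rightHom a, rightHom b⁆ := map_commutatorElement _ _ _
    rw [MonoidHom.mem_ker, this,
      commutatorElement_eq_one_iff_commute]
    exact mul_comm _ _
  · rintro x ⟨f, rfl⟩
    set ψ : ℤ → G := fun k => f (Multiplicative.ofAdd (-k)) with hψ
    set g : Zm → G := fun x => (wAux ψ (-(x.toAdd)))⁻¹ with hg
    have key : inl f = ⁅(inl g : Wr G Zm), (inr : Zm →* Wr G Zm) zGen⁆ := by
      ext x
      · simp only [commutatorElement_def, mul_left, mul_right, inv_left, inv_right,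
          left_inl, right_inl, left_inr, right_inr, map_one, map_inv, MulAut.one_apply,
          mul_one, one_mul, inv_inv, inv_one, Pi.mul_apply, Pi.inv_apply, Pi.one_apply]
        show f x = g x * (g (x * zGen))⁻¹
        have e1 : Multiplicative.toAdd (x * zGen) = x.toAdd + 1 := rfl
        have e2 : (-(x.toAdd + 1) : ℤ) = -(x.toAdd) - 1 := by ring
        have hk := wAux_key ψ (-(x.toAdd))
        rw [hg]
        simp only [e1, e2, hk, mul_inv_rev, inv_inv, inv_mul_cancel_left]
        simp [hψ]
      · simp [commutatorElement_def, mul_right, inv_right]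
    rw [key, commutator_def]
    exact Subgroup.commutator_mem_commutator (Subgroup.mem_top _) (Subgroup.mem_top _)
end

section
/- Let K be a group in which every element of the commutator subgroup [K,K] is itself a single commutator [a,b] for some a,b ∈ K. Then for any index set I, the commutator subgroup of the direct power K^I equals ([K,K])^I, i.e. the set of I-tuples each of whose coordinates lies in [K,K]. -/
/-- If every element of the commutator subgroup of a group K is a single commutator
a⁻¹b⁻¹ab, then for any index set I the commutator subgroup of the direct power K^I is
the set of I-tuples all of whose coordinates lie in the commutator subgroup of K. -/
theorem stmt_2 (K : Type*) [Group K]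
    (h : ∀ g ∈ commutator K, ∃ a b : K, g = a⁻¹ * b⁻¹ * a * b) (I : Type*) :
    commutator (I → K) = Subgroup.pi Set.univ (fun _ : I => commutator K) := by
  apply le_antisymm
  · intro x hx
    rw [Subgroup.mem_pi]
    intro i _
    have hmap : (Subgroup.map (Pi.evalMonoidHom (fun _ : I => K) i)
        (commutator (I → K))) ≤ commutator K := by
      rw [commutator_def, Subgroup.map_commutator, commutator_def]
      exact Subgroup.commutator_mono le_top le_top
    exact hmap ⟨x, hx, rfl⟩
  · intro x hx
    rw [Subgroup.mem_pi] at hx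
    choose a b hab using fun i => h (x i) (hx i (Set.mem_univ i))
    have hx' : x = @Bracket.bracket (I → K) (I → K) commutatorElement a⁻¹ b⁻¹ := by
      funext i
      simp only [commutatorElement_def, Pi.mul_apply, Pi.inv_apply, inv_inv]
      rw [hab i]
    rw [hx']
    exact Subgroup.commutator_mem_commutator (Subgroup.mem_top _) (Subgroup.mem_top _)
end

section
/- For any group G and any set I, the commutator subgroup of the direct power (G ≀ ℤ)^I equals ([G ≀ ℤ, G ≀ ℤ])^I, the product over I of copies of the commutator subgroup of G ≀ ℤ. -/
open scoped commutatorElement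
section Aux

variable {G : Type*} [Group G]

private def posF (g : ℤ → G) : ℕ → G
  | 0 => 1
  | (k+1) => (g k)⁻¹ * posF g k

private def negF (g : ℤ → G) : ℕ → G
  | 0 => 1
  | (k+1) => g (Int.negSucc k) * negF g k

private def solF (g : ℤ → G) : ℤ → G
  | Int.ofNat k => posF g k
  | Int.negSucc k => negF g (k+1)

private lemma solF_spec (g : ℤ → G) (n : ℤ) : solF g n * (solF g (n+1))⁻¹ = g n := by
  cases n with
  | ofNat k =>
      have h1 : (Int.ofNat k) + 1 = Int.ofNat (k+1) := rfl
      rw [h1]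
      show posF g k * (posF g (k+1))⁻¹ = g (Int.ofNat k)
      simp [posF]
  | negSucc k =>
      cases k with
      | zero =>
          have h1 : Int.negSucc 0 + 1 = Int.ofNat 0 := rfl
          rw [h1]
          show negF g 1 * (posF g 0)⁻¹ = g (Int.negSucc 0)
          simp [negF, posF]
      | succ j =>
          have h1 : Int.negSucc (j+1) + 1 = Int.negSucc j := rfl
          rw [h1]
          show negF g (j+2) * (negF g (j+1))⁻¹ = g (Int.negSucc (j+1))
          simp [negF, mul_assoc]

/-- Every element of the base group of `G ≀ ℤ` is a single commutator. -/
private lemma base_comm (w : Wr G Zm) (hw : w.right = 1) :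
    ∃ a b : Wr G Zm, w = ⁅a, b⁆ := by
  set g : Zm → G := w.left with hg
  set f : Zm → G := fun x => solF (fun n => g (Multiplicative.ofAdd n)) (Multiplicative.toAdd x)
    with hf
  refine ⟨⟨f, 1⟩, ⟨1, zGen⟩, ?_⟩
  have hcomm : (⁅(⟨f, 1⟩ : Wr G Zm), (⟨1, zGen⟩ : Wr G Zm)⁆ : Wr G Zm) =
      ⟨fun x => f x * (f (x * zGen))⁻¹, 1⟩ := by
    ext x
    · simp only [commutatorElement_def, SemidirectProduct.mul_left, SemidirectProduct.inv_left,
        SemidirectProduct.mul_right, SemidirectProduct.inv_right]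
      simp [wrAut]
    · simp [commutatorElement_def]
  rw [hcomm]
  ext x
  · show g x = f x * (f (x * zGen))⁻¹
    have := solF_spec (fun n => g (Multiplicative.ofAdd n)) (Multiplicative.toAdd x)
    exact this.symm
  · exact hw

private lemma comm_right (w : Wr G Zm) (hw : w ∈ commutator (Wr G Zm)) : w.right = 1 := by
  have : commutator (Wr G Zm) ≤ (SemidirectProduct.rightHom :
      Wr G Zm →* Zm).ker := by
    rw [commutator_eq_closure]
    apply Subgroup.closure_le _ |>.mpr
    rintro x ⟨a, b, rfl⟩
    simp [MonoidHom.mem_ker, commutatorElement_def, mul_comm]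
  simpa [MonoidHom.mem_ker] using this hw

end Aux

/-- For any group G and any set I, the commutator subgroup of the direct power of copies of
the wreath product of G with the infinite cyclic group, indexed by I, is the product over I
of copies of the commutator subgroup. -/
theorem stmt_3 (G : Type*) [Group G] (I : Type*) :
    commutator (I → Wr G Zm) =
      Subgroup.pi Set.univ (fun _ : I => commutator (Wr G Zm)) := by
  apply le_antisymm
  · rw [commutator, Subgroup.commutator_le]
    intro a _ b _
    intro i _
    exact Subgroup.commutator_mem_commutator (Subgroup.mem_top _) (Subgroup.mem_top _)
  · intro h hh
    have hmem : ∀ i, h i ∈ commutator (Wr G Zm) := fun i => hh i (Set.mem_univ i)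
    have hright : ∀ i, (h i).right = 1 := fun i => comm_right _ (hmem i)
    choose a b hab using fun i => base_comm (h i) (hright i)
    have : h = ⁅a, b⁆ := by
      funext i
      exact hab i
    rw [this]
    exact Subgroup.commutator_mem_commutator (Subgroup.mem_top _) (Subgroup.mem_top _)
end

section
/- Let 𝒱 be a variety of groups (a class of groups closed under subgroups, quotients, and arbitrary direct products, equivalently defined by a set of group laws) and p a prime. If 𝒱 contains all finite p-groups, then 𝒱 is the variety of all groups; equivalently, every group law that holds in all finite p-groups is a trivial law. -/
open Finset List
set_option linter.unusedSectionVars false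
set_option maxHeartbeats 1000000
namespace StmtNine
section Lists
variable {α : Type*} [DecidableEq α]



variable {α : Type*} [DecidableEq α]

/-- Run-length encoding of a list. -/
def runs : List α → List (α × ℕ)
  | [] => []
  | a :: l => match runs l with
    | [] => [(a, 1)]
    | (b, m) :: t => if a = b then (b, m + 1) :: t else (a, 1) :: (b, m) :: t

@[simp] lemma runs_nil : runs ([] : List α) = [] := rfl

lemma runs_cons_nil {l : List α} (a : α) (h : runs l = []) : runs (a :: l) = [(a, 1)] := by
  rw [runs, h]

lemma runs_cons_cons {l : List α} (a b : α) (m : ℕ) (t : List (α × ℕ))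
    (h : runs l = (b, m) :: t) :
    runs (a :: l) = if a = b then (b, m + 1) :: t else (a, 1) :: (b, m) :: t := by
  rw [runs, h]

lemma runs_join : ∀ l : List α, ((runs l).flatMap fun x => List.replicate x.2 x.1) = l := by
  intro l
  induction l with
  | nil => rfl
  | cons a l ih =>
    rcases h : runs l with _ | ⟨⟨b, m⟩, t⟩
    · rw [runs_cons_nil a h]
      simp only [h, List.flatMap_nil] at ih
      simp [← ih]
    · rw [runs_cons_cons a b m t h]
      rw [h] at ih
      by_cases hab : a = b
      · rw [if_pos hab]
        simp only [List.flatMap_cons] at ih ⊢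
        rw [List.replicate_succ, List.cons_append, ih, hab]
      · rw [if_neg hab]
        simp only [List.flatMap_cons] at ih ⊢
        rw [← ih]
        simp [List.replicate_succ]

lemma runs_pos : ∀ l : List α, ∀ x ∈ runs l, 1 ≤ x.2 := by
  intro l
  induction l with
  | nil => simp
  | cons a l ih =>
    intro x hx
    rcases h : runs l with _ | ⟨⟨b, m⟩, t⟩
    · rw [runs_cons_nil a h] at hx
      simp at hx; simp [hx]
    · rw [runs_cons_cons a b m t h] at hx
      by_cases hab : a = b
      · rw [if_pos hab] at hx
        rcases List.mem_cons.mp hx with hx | hx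
        · simp [hx]
        · exact ih x (h ▸ List.mem_cons_of_mem _ hx)
      · rw [if_neg hab] at hx
        rcases List.mem_cons.mp hx with hx | hx
        · simp [hx]
        · exact ih x (h ▸ hx)

lemma runs_head : ∀ (l : List α) (a : α) (m : ℕ) (t : List (α × ℕ)),
    runs l = (a, m) :: t → ∃ l', l = a :: l' := by
  intro l
  induction l with
  | nil => simp [runs_nil]
  | cons c l _ =>
    intro a m t h
    rcases h' : runs l with _ | ⟨⟨b, m'⟩, t'⟩
    · rw [runs_cons_nil c h'] at h
      simp only [List.cons.injEq, Prod.mk.injEq] at h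
      exact ⟨l, by rw [h.1.1]⟩
    · rw [runs_cons_cons c b m' t' h'] at h
      by_cases hcb : c = b
      · rw [if_pos hcb] at h
        simp only [List.cons.injEq, Prod.mk.injEq] at h
        exact ⟨l, by rw [← h.1.1, hcb]⟩
      · rw [if_neg hcb] at h
        simp only [List.cons.injEq, Prod.mk.injEq] at h
        exact ⟨l, by rw [h.1.1]⟩

/-- If adjacent letters of `l` satisfy `S`, then the letters of adjacent runs satisfy `S`
and are distinct. -/
lemma runs_chain {S : α → α → Prop} : ∀ l : List α, List.IsChain S l →
    List.IsChain (fun x y : α × ℕ => x.1 ≠ y.1 ∧ S x.1 y.1) (runs l) := by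
  intro l
  induction l with
  | nil => simp
  | cons a l ih =>
    intro hc
    have ihc := ih hc.tail
    rcases h : runs l with _ | ⟨⟨b, m⟩, t⟩
    · rw [runs_cons_nil a h]; simp
    · rw [h] at ihc
      obtain ⟨l', hl'⟩ := runs_head l b m t h
      have hSab : S a b := by
        subst hl'
        rcases hc with _ | _ | ⟨hS, _⟩
        assumption
      rw [runs_cons_cons a b m t h]
      by_cases hab : a = b
      · rw [if_pos hab]
        rw [List.isChain_cons] at ihc ⊢
        exact ⟨ihc.1, ihc.2⟩
      · rw [if_neg hab]
        exact List.IsChain.cons_cons ⟨hab, hSab⟩ ihc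



def expnd : List α → List ℕ → List α
  | g :: gs, j :: js => List.replicate j g ++ expnd gs js
  | _, _ => []

@[simp] lemma expnd_nil_left (js : List ℕ) : expnd ([] : List α) js = [] := by
  cases js <;> rfl

@[simp] lemma expnd_nil_right (gs : List α) : expnd gs [] = [] := by
  cases gs <;> rfl

@[simp] lemma expnd_cons (g : α) (gs : List α) (j : ℕ) (js : List ℕ) :
    expnd (g :: gs) (j :: js) = List.replicate j g ++ expnd gs js := rfl

lemma head?_replicate_append {g : α} {k : ℕ} (hk : 1 ≤ k) (l : List α) :
    (List.replicate k g ++ l).head? = some g := by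
  obtain ⟨k, rfl⟩ := Nat.exists_eq_add_of_le hk
  rw [add_comm, List.replicate_succ]
  rfl

lemma runs_replicate_append (g : α) (l : List α) {a : ℕ} (ha : 1 ≤ a)
    (hl : ∀ x ∈ (runs l).head?, x.1 ≠ g) :
    runs (List.replicate a g ++ l) = (g, a) :: runs l := by
  induction a, ha using Nat.le_induction with
  | base =>
    rw [List.replicate_one, List.singleton_append]
    rcases h : runs l with _ | ⟨⟨b, m⟩, t⟩
    · rw [runs_cons_nil g h]
    · have hbg : b ≠ g := by
        have := hl (b, m) (by rw [h]; rfl)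
        exact this
      rw [runs_cons_cons g b m t h, if_neg (Ne.symm hbg)]
  | succ a ha ih =>
    rw [List.replicate_succ, List.cons_append]
    rw [runs_cons_cons g g a (runs l) ih, if_pos rfl]

lemma expnd_runs : ∀ (gs : List α) (as : List ℕ), as.length = gs.length →
    List.IsChain (· ≠ ·) gs → (∀ a ∈ as, 1 ≤ a) →
    runs (expnd gs as) = gs.zip as := by
  intro gs
  induction gs with
  | nil =>
    intro as h _ _
    obtain rfl : as = [] := List.length_eq_zero_iff.mp (by simpa using h)
    simp
  | cons g gs ih =>
    intro as h hchain hpos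
    rcases as with _ | ⟨a, as⟩
    · simp at h
    · have h' : as.length = gs.length := by simpa using h
      have ihr := ih as h' hchain.tail (fun x hx => hpos x (List.mem_cons_of_mem _ hx))
      rw [expnd_cons, List.zip_cons_cons,
        runs_replicate_append g _ (hpos a (List.mem_cons_self)) ?_, ihr]
      · intro x hx
        rw [ihr] at hx
        rcases gs with _ | ⟨g₂, gs'⟩
        · simp at hx
        · rcases as with _ | ⟨a₂, as'⟩
          · simp at h'
          · rw [List.zip_cons_cons] at hx
            simp only [List.head?_cons, Option.mem_def, Option.some.injEq] at hx
            subst hx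
            rcases hchain with _ | _ | ⟨hne, _⟩
            exact Ne.symm (by simpa using hne)

lemma rc_rep (g : α) (l : List α) : ∀ {j : ℕ}, 1 ≤ j →
    ∃ m t, runs (List.replicate j g ++ l) = (g, m) :: t ∧
      ((g, m) :: t : List (α × ℕ)).length ≤ 1 + (runs l).length := by
  intro j hj
  induction j, hj using Nat.le_induction with
  | base =>
    rw [List.replicate_one, List.singleton_append]
    rcases h : runs l with _ | ⟨⟨b, m⟩, t⟩
    · exact ⟨1, [], by rw [runs_cons_nil g h], by simp⟩
    · by_cases hgb : g = b
      · subst hgb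
        exact ⟨m + 1, t, by rw [runs_cons_cons g g m t h, if_pos rfl], by simp⟩
      · exact ⟨1, (b, m) :: t, by rw [runs_cons_cons g b m t h, if_neg hgb], by
          simp [Nat.add_comm]⟩
  | succ j hj ih =>
    obtain ⟨m, t, hrt, hlen⟩ := ih
    rw [List.replicate_succ, List.cons_append]
    exact ⟨m + 1, t, by rw [runs_cons_cons g g m t hrt, if_pos rfl], by simpa using hlen⟩

lemma rc_le : ∀ (gs : List α) (js : List ℕ), (runs (expnd gs js)).length ≤ gs.length := by
  intro gs
  induction gs with
  | nil => intro js; simp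
  | cons g gs ih =>
    intro js
    rcases js with _ | ⟨j, js⟩
    · simp
    · rw [expnd_cons]
      rcases Nat.eq_zero_or_pos j with hj | hj
      · subst hj
        simpa using (ih js).trans (Nat.le_succ _)
      · obtain ⟨m, t, hrt, hlen⟩ := rc_rep g (expnd gs js) hj
        rw [hrt]
        calc ((g, m) :: t : List (α × ℕ)).length ≤ 1 + (runs (expnd gs js)).length := hlen
        _ ≤ 1 + gs.length := by simpa using ih js
        _ = (g :: gs).length := by simp [Nat.add_comm]

/-- Uniqueness of the expansion: the exponents are determined. -/
lemma expnd_unique : ∀ (gs : List α) (js as : List ℕ), js.length = gs.length →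
    as.length = gs.length → List.IsChain (· ≠ ·) gs → (∀ a ∈ as, 1 ≤ a) →
    expnd gs js = expnd gs as → js = as := by
  intro gs
  induction gs with
  | nil =>
    intro js as hjs has _ _ _
    obtain rfl : js = [] := List.length_eq_zero_iff.mp (by simpa using hjs)
    obtain rfl : as = [] := List.length_eq_zero_iff.mp (by simpa using has)
    rfl
  | cons g gs ih =>
    intro js as hjs has hchain hpos heq
    rcases js with _ | ⟨j, js⟩; · simp at hjs
    rcases as with _ | ⟨a, as⟩; · simp at has
    have hjs' : js.length = gs.length := by simpa using hjs
    have has' : as.length = gs.length := by simpa using has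
    have hpos' : ∀ x ∈ as, 1 ≤ x := fun x hx => hpos x (List.mem_cons_of_mem _ hx)
    have ha1 : 1 ≤ a := hpos a (List.mem_cons_self)
    rw [expnd_cons, expnd_cons] at heq
    have hrca : runs (expnd gs as) = gs.zip as := expnd_runs gs as has' hchain.tail hpos'
    have hhead : ∀ x ∈ (runs (expnd gs as)).head?, x.1 ≠ g := by
      intro x hx
      rw [hrca] at hx
      rcases gs with _ | ⟨g₂, gs'⟩
      · simp at hx
      · rcases as with _ | ⟨a₂, as'⟩
        · simp at has'
        · rw [List.zip_cons_cons] at hx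
          simp only [List.head?_cons, Option.mem_def, Option.some.injEq] at hx
          subst hx
          rcases hchain with _ | _ | ⟨hne, _⟩
          exact Ne.symm (by simpa using hne)
    rcases lt_trichotomy j a with hlt | hEq | hgt
    · -- j < a : run-count contradiction
      exfalso
      have hsplit : List.replicate a g = List.replicate j g ++ List.replicate (a - j) g := by
        rw [← List.replicate_add, Nat.add_sub_cancel' hlt.le]
      rw [hsplit, List.append_assoc] at heq
      have heq2 : expnd gs js = List.replicate (a - j) g ++ expnd gs as :=
        List.append_cancel_left heq
      have hrc : runs (List.replicate (a - j) g ++ expnd gs as)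
          = (g, a - j) :: runs (expnd gs as) :=
        runs_replicate_append g _ (by omega) hhead
      have h1 : (runs (expnd gs js)).length ≤ gs.length := rc_le gs js
      rw [heq2, hrc, hrca] at h1
      have : (gs.zip as).length = gs.length := by
        rw [List.length_zip, has']; simp
      simp [this] at h1
    · -- j = a : cancel and induct
      subst hEq
      have := List.append_cancel_left heq
      rw [ih js as hjs' has' hchain.tail hpos' this]
    · -- j > a : head contradiction
      exfalso
      have hsplit : List.replicate j g = List.replicate a g ++ List.replicate (j - a) g := by
        rw [← List.replicate_add, Nat.add_sub_cancel' hgt.le]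
      rw [hsplit, List.append_assoc] at heq
      have heq2 : List.replicate (j - a) g ++ expnd gs js = expnd gs as :=
        List.append_cancel_left heq
      have hh1 : (List.replicate (j - a) g ++ expnd gs js).head? = some g :=
        head?_replicate_append (by omega) _
      rcases gs with _ | ⟨g₂, gs'⟩
      · rw [expnd_nil_left, expnd_nil_left, List.append_nil] at heq2
        rw [heq2] at hh1
        simp at hh1
      · rcases as with _ | ⟨a₂, as'⟩
        · simp at has'
        · have ha₂ : 1 ≤ a₂ := hpos' a₂ (List.mem_cons_self)
          rw [expnd_cons] at heq2
          have hh2 : (List.replicate a₂ g₂ ++ expnd gs' as').head? = some g₂ :=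
            head?_replicate_append ha₂ _
          rw [heq2, hh2] at hh1
          rcases hchain with _ | _ | ⟨hne, _⟩
          exact (by simpa using hne : g ≠ g₂) (by simpa using hh1.symm)



end Lists

lemma lucas_aux (p : ℕ) [hp : Fact p.Prime] :
    ∀ (v m : ℕ), p ^ v ∣ m → ¬ p ^ (v + 1) ∣ m → ((m.choose (p ^ v) : ZMod p) ≠ 0) := by
  intro v
  induction v with
  | zero =>
    intro m _ h1
    rw [pow_zero, Nat.choose_one_right]
    rw [Ne, ZMod.natCast_eq_zero_iff]
    simpa using h1
  | succ v ih =>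
    intro m hdvd hndvd
    have hpm : p ∣ m := dvd_trans (dvd_pow_self p (Nat.succ_ne_zero v)) hdvd
    have hmod : (m.choose (p ^ (v + 1)) : ZMod p)
        = ((m % p).choose (p ^ (v + 1) % p) * (m / p).choose (p ^ (v + 1) / p) : ℕ) :=
      (ZMod.natCast_eq_natCast_iff _ _ _).mpr Choose.choose_modEq_choose_mod_mul_choose_div_nat
    have h1 : p ^ (v + 1) % p = 0 := by simp [Nat.pow_succ, Nat.mul_mod_left]
    have h2 : p ^ (v + 1) / p = p ^ v := by rw [pow_succ, Nat.mul_div_cancel _ hp.out.pos]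
    rw [h1, h2, Nat.choose_zero_right, one_mul] at hmod
    rw [hmod]
    apply ih
    · rw [Nat.dvd_div_iff_mul_dvd hpm, ← pow_succ']
      exact hdvd
    · rw [Nat.dvd_div_iff_mul_dvd hpm, ← pow_succ']
      exact hndvd

lemma lucas_key (p : ℕ) [hp : Fact p.Prime] {m : ℕ} (hm : m ≠ 0) :
    ((m.choose (p ^ padicValNat p m) : ZMod p) ≠ 0) :=
  lucas_aux p _ m pow_padicValNat_dvd (pow_succ_padicValNat_not_dvd hm)

section Matrices

variable (p : ℕ) [Fact p.Prime] (n L : ℕ)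

/-- Words of length at most `L` in the alphabet `Fin n`. -/
abbrev V (n L : ℕ) : Type := {l : List (Fin n) // l.length ≤ L}

noncomputable instance (n L : ℕ) : Fintype (V n L) :=
  Fintype.ofInjective (fun v (k : Fin (L + 1)) => v.val[k.val]?)
    (by
      intro u v h
      apply Subtype.ext
      apply List.ext_getElem?
      intro k
      by_cases hk : k < L + 1
      · exact congrFun h ⟨k, hk⟩
      · rw [List.getElem?_eq_none (u.2.trans (by omega)),
          List.getElem?_eq_none (v.2.trans (by omega))])

/-- The truncated "polynomial" matrix algebra. -/
abbrev A (p n L : ℕ) : Type := Matrix (V n L) (V n L) (ZMod p)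

/-- The empty word. -/
def eps (n L : ℕ) : V n L := ⟨[], by simp⟩

/-- The matrix of left multiplication by the monomial `m`. -/
def Em (m : List (Fin n)) : A p n L := fun u v => if u.val = m ++ v.val then 1 else 0

lemma Em_nil : Em p n L [] = 1 := by
  ext u v
  rw [Em, Matrix.one_apply]
  simp [Subtype.ext_iff]

lemma Em_mul (m m' : List (Fin n)) :
    Em p n L m * Em p n L m' = Em p n L (m ++ m') := by
  ext u v
  rw [Matrix.mul_apply, Em]
  by_cases h : u.val = m ++ (m' ++ v.val)
  · have hlen : (m' ++ v.val).length ≤ L := by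
      have := u.2
      rw [h] at this
      simp only [List.length_append] at this ⊢
      omega
    rw [Finset.sum_eq_single (⟨m' ++ v.val, hlen⟩ : V n L)]
    · rw [Em, Em, if_pos h, if_pos rfl, one_mul, if_pos (by rw [List.append_assoc]; exact h)]
    · intro w _ hw
      rw [Em, Em]
      rcases eq_or_ne w.val (m' ++ v.val) with h2 | h2
      · exact absurd (Subtype.ext h2) hw
      · rw [if_neg h2, mul_zero]
    · intro habs
      exact absurd (Finset.mem_univ _) habs
  · rw [if_neg (by rw [← List.append_assoc] at h; exact h)]
    apply Finset.sum_eq_zero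
    intro w _
    rw [Em, Em]
    rcases eq_or_ne w.val (m' ++ v.val) with h2 | h2
    · rw [if_neg (by rw [h2]; exact h), zero_mul]
    · rw [if_neg h2, mul_zero]

lemma Em_eq_zero (m : List (Fin n)) (h : L < m.length) : Em p n L m = 0 := by
  ext u v
  rw [Em]
  rw [if_neg, Matrix.zero_apply]
  intro habs
  have := u.2
  rw [habs] at this
  simp only [List.length_append] at this
  omega

/-- The matrix for the generator `i`. -/
def Egen (i : Fin n) : A p n L := Em p n L [i]

lemma Egen_pow (i : Fin n) (j : ℕ) :
    Egen p n L i ^ j = Em p n L (List.replicate j i) := by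
  induction j with
  | zero => rw [pow_zero, List.replicate_zero, Em_nil]
  | succ j ih =>
    rw [pow_succ', ih, Egen, Em_mul]
    rw [List.replicate_succ]
    rfl

/-- Strictly length-increasing matrices. -/
def Nl (x : A p n L) : Prop := ∀ u v, x u v ≠ 0 → v.val.length < u.val.length

lemma Nl.zero : Nl p n L 0 := by intro u v h; simp at h

lemma Nl.add {x y : A p n L} (hx : Nl p n L x) (hy : Nl p n L y) : Nl p n L (x + y) := by
  intro u v h
  rcases eq_or_ne (x u v) 0 with h1 | h1
  · exact hy u v (by simpa [Matrix.add_apply, h1] using h)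
  · exact hx u v h1

lemma Nl.neg {x : A p n L} (hx : Nl p n L x) : Nl p n L (-x) := by
  intro u v h
  exact hx u v (by simpa using h)

lemma Nl.mul {x y : A p n L} (hx : Nl p n L x) (hy : Nl p n L y) : Nl p n L (x * y) := by
  intro u v h
  rw [Matrix.mul_apply] at h
  obtain ⟨w, _, hw⟩ := Finset.exists_ne_zero_of_sum_ne_zero h
  have h1 : x u w ≠ 0 := fun h0 => hw (by rw [h0, zero_mul])
  have h2 : y w v ≠ 0 := fun h0 => hw (by rw [h0, mul_zero])
  exact (hy w v h2).trans (hx u w h1)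

lemma Nl.sum {s : Finset ℕ} {f : ℕ → A p n L} (hf : ∀ j ∈ s, Nl p n L (f j)) :
    Nl p n L (∑ j ∈ s, f j) := by
  classical
  induction s using Finset.induction_on with
  | empty => simpa using Nl.zero p n L
  | insert _ _ hj ih =>
    rw [Finset.sum_insert hj]
    exact (hf _ (Finset.mem_insert_self _ _)).add p n L
      (ih fun j hjs => hf j (Finset.mem_insert_of_mem hjs))

lemma Nl.pow_len {x : A p n L} (hx : Nl p n L x) :
    ∀ (k : ℕ) (u v : V n L), (x ^ k) u v ≠ 0 → v.val.length + k ≤ u.val.length := by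
  intro k
  induction k with
  | zero =>
    intro u v h
    rw [pow_zero, Matrix.one_apply] at h
    have huv : u = v := by by_contra hne; exact h (if_neg hne)
    rw [huv]
    omega
  | succ k ih =>
    intro u v h
    rw [pow_succ'] at h
    rw [Matrix.mul_apply] at h
    obtain ⟨w, _, hw⟩ := Finset.exists_ne_zero_of_sum_ne_zero h
    have h1 : x u w ≠ 0 := fun h0 => hw (by rw [h0, zero_mul])
    have h2 : (x ^ k) w v ≠ 0 := fun h0 => hw (by rw [h0, mul_zero])
    have := ih w v h2
    have := hx u w h1
    omega

lemma Nl.pow_eq_zero {x : A p n L} (hx : Nl p n L x) {j : ℕ} (hj : L + 1 ≤ j) :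
    x ^ j = 0 := by
  ext u v
  rw [Matrix.zero_apply]
  by_contra h
  have := hx.pow_len p n L j u v h
  have := u.2
  omega

lemma Nl.pow_succ' {x : A p n L} (hx : Nl p n L x) (j : ℕ) : Nl p n L (x ^ (j + 1)) := by
  intro u v h
  have := hx.pow_len p n L (j + 1) u v h
  omega


/-- Truncated geometric series `∑ (-x)^j`, the inverse of `1 + x` for `x` length-increasing. -/
noncomputable def sGeom (x : A p n L) : A p n L := ∑ j ∈ Finset.range (L + 1), (-x) ^ j

lemma neg_pow_top {x : A p n L} (hx : Nl p n L x) : (-x) ^ (L + 1) = 0 := by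
  rw [neg_pow, hx.pow_eq_zero p n L (le_refl _), mul_zero]

lemma sGeom_mul {x : A p n L} (hx : Nl p n L x) : sGeom p n L x * (1 + x) = 1 := by
  have h := geom_sum_mul (-x) (L + 1)
  rw [neg_pow_top p n L hx, zero_sub] at h
  have h3 : sGeom p n L x * (1 + x) = -((∑ i ∈ Finset.range (L + 1), (-x) ^ i) * (-x - 1)) := by
    rw [sGeom]; noncomm_ring
  rw [h3, h, neg_neg]

lemma mul_sGeom {x : A p n L} (hx : Nl p n L x) : (1 + x) * sGeom p n L x = 1 := by
  have h := mul_geom_sum (-x) (L + 1)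
  rw [neg_pow_top p n L hx, zero_sub] at h
  have h3 : (1 + x) * sGeom p n L x = -((-x - 1) * ∑ i ∈ Finset.range (L + 1), (-x) ^ i) := by
    rw [sGeom]; noncomm_ring
  rw [h3, h, neg_neg]

lemma sGeom_nl {x : A p n L} (hx : Nl p n L x) : Nl p n L (sGeom p n L x - 1) := by
  have : sGeom p n L x = (∑ j ∈ Finset.range L, (-x) ^ (j + 1)) + 1 := by
    rw [sGeom, Finset.sum_range_succ']
    simp
  rw [this, add_sub_cancel_right]
  exact Nl.sum p n L fun j _ => (hx.neg p n L).pow_succ' p n L j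

/-- The subgroup of unipotent units. -/
def UU (p n L : ℕ) [Fact p.Prime] : Subgroup (A p n L)ˣ where
  carrier := {x | Nl p n L ((x : A p n L) - 1)}
  one_mem' := by
    show Nl p n L ((1 : A p n L) - 1)
    rw [sub_self]
    exact Nl.zero p n L
  mul_mem' := by
    intro a b ha hb
    show Nl p n L ((↑(a * b) : A p n L) - 1)
    have : (↑(a * b) : A p n L) - 1
        = ((↑a : A p n L) - 1) * ((↑b : A p n L) - 1) + (((↑a : A p n L) - 1) + ((↑b : A p n L) - 1)) := by
      rw [Units.val_mul]; noncomm_ring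
    rw [this]
    exact (ha.mul p n L hb).add p n L (ha.add p n L hb)
  inv_mem' := by
    intro a ha
    show Nl p n L ((↑a⁻¹ : A p n L) - 1)
    have h1 : sGeom p n L ((↑a : A p n L) - 1) * ↑a = 1 := by
      have := sGeom_mul p n L ha
      rwa [add_sub_cancel] at this
    have key : (↑a⁻¹ : A p n L) = sGeom p n L ((↑a : A p n L) - 1) := by
      calc (↑a⁻¹ : A p n L) = 1 * ↑a⁻¹ := (one_mul _).symm
      _ = (sGeom p n L ((↑a : A p n L) - 1) * ↑a) * ↑a⁻¹ := by rw [h1]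
      _ = sGeom p n L ((↑a : A p n L) - 1) * (↑a * ↑a⁻¹) := by rw [mul_assoc]
      _ = sGeom p n L ((↑a : A p n L) - 1) := by rw [Units.mul_inv, mul_one]
    rw [key]
    exact sGeom_nl p n L ha

lemma unipotent_pow_eq_one {x : A p n L} (hx : Nl p n L x) :
    (1 + x) ^ (p ^ (L + 1)) = 1 := by
  haveI : Nonempty (V n L) := ⟨eps n L⟩
  have hcomm := (Commute.one_right x).add_pow (p ^ (L + 1))
  rw [add_comm x 1] at hcomm
  rw [hcomm]
  rw [Finset.sum_eq_single 0]
  · simp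
  · intro j _ hj
    rcases le_or_gt j L with hjL | hjL
    · have hdvd : p ∣ (p ^ (L + 1)).choose j := by
        apply Nat.Prime.dvd_choose_pow Fact.out hj
        intro hEq
        have : L + 1 < p ^ (L + 1) := Nat.lt_pow_self (Nat.Prime.one_lt Fact.out)
        omega
      have : ((p ^ (L + 1)).choose j : A p n L) = 0 :=
        (CharP.cast_eq_zero_iff (A p n L) p _).mpr hdvd
      rw [this, mul_zero]
    · rw [hx.pow_eq_zero p n L (by omega), zero_mul, zero_mul]
  · intro habs
    exact absurd (Finset.mem_range.mpr (Nat.succ_pos _)) habs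



end Matrices

section Entry
variable (p : ℕ) [Fact p.Prime] (n L : ℕ)

lemma Em_apply (m : List (Fin n)) (u v : V n L) :
    Em p n L m u v = if u.val = m ++ v.val then 1 else 0 := rfl

/-- Truncated expansion of `(1 + E i) ^ M`. -/
noncomputable def Xmat (i : Fin n) (M : ℕ) : A p n L :=
  ∑ j ∈ Finset.range (L + 1), (M.choose j : ZMod p) • Em p n L (List.replicate j i)

lemma one_add_pow_eq_Xmat (i : Fin n) (M : ℕ) :
    (1 + Egen p n L i) ^ M = Xmat p n L i M := by
  have h := (Commute.one_right (Egen p n L i)).add_pow M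
  rw [add_comm (Egen p n L i) 1] at h
  rw [h, Xmat]
  have e1 : ∀ j : ℕ, Egen p n L i ^ j * 1 ^ (M - j) * ((M.choose j : ℕ) : A p n L)
      = (M.choose j : ZMod p) • Em p n L (List.replicate j i) := by
    intro j
    rw [one_pow, mul_one, (Nat.cast_commute (M.choose j) (Egen p n L i ^ j)).symm.eq,
      ← nsmul_eq_mul, Egen_pow, Nat.cast_smul_eq_nsmul]
  have big : ∀ (s : Finset ℕ), s ⊆ Finset.range (M + L + 2) →
      (∀ j ∈ Finset.range (M + L + 2), j ∉ s →
        (M.choose j : ZMod p) • Em p n L (List.replicate j i) = 0) →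
      ∑ j ∈ s, (M.choose j : ZMod p) • Em p n L (List.replicate j i)
        = ∑ j ∈ Finset.range (M + L + 2), (M.choose j : ZMod p) • Em p n L (List.replicate j i) :=
    fun s hsub hz => Finset.sum_subset hsub hz
  calc ∑ j ∈ Finset.range (M + 1), Egen p n L i ^ j * 1 ^ (M - j) * ((M.choose j : ℕ) : A p n L)
      = ∑ j ∈ Finset.range (M + 1), (M.choose j : ZMod p) • Em p n L (List.replicate j i) := by
        exact Finset.sum_congr rfl fun j _ => e1 j
    _ = ∑ j ∈ Finset.range (M + L + 2), (M.choose j : ZMod p) • Em p n L (List.replicate j i) := by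
        apply big
        · exact Finset.range_subset_range.mpr (by omega)
        · intro j _ hj
          rw [Finset.mem_range, not_lt] at hj
          rw [Nat.choose_eq_zero_of_lt (by omega), Nat.cast_zero, zero_smul]
    _ = ∑ j ∈ Finset.range (L + 1), (M.choose j : ZMod p) • Em p n L (List.replicate j i) := by
        symm
        apply big
        · exact Finset.range_subset_range.mpr (by omega)
        · intro j _ hj
          rw [Finset.mem_range, not_lt] at hj
          rw [Em_eq_zero p n L _ (by simpa using by omega : L < (List.replicate j i).length),
            smul_zero]

lemma Xmat_ne_zero_exists {i : Fin n} {M : ℕ} {u w : V n L} (h : Xmat p n L i M u w ≠ 0) :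
    ∃ j, u.val = List.replicate j i ++ w.val := by
  rw [Xmat, Matrix.sum_apply] at h
  obtain ⟨j, _, hj⟩ := Finset.exists_ne_zero_of_sum_ne_zero h
  refine ⟨j, ?_⟩
  by_contra hne
  rw [Matrix.smul_apply, Em_apply, if_neg hne, smul_zero] at hj
  exact hj rfl

lemma Xmat_apply_eq (i : Fin n) (M : ℕ) (u w : V n L) (j : ℕ) (hj : j ≤ L)
    (h : u.val = List.replicate j i ++ w.val) :
    Xmat p n L i M u w = (M.choose j : ZMod p) := by
  rw [Xmat, Matrix.sum_apply]
  rw [Finset.sum_eq_single j]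
  · rw [Matrix.smul_apply, Em_apply, if_pos h, smul_eq_mul, mul_one]
  · intro j' _ hj'
    rw [Matrix.smul_apply, Em_apply, if_neg, smul_zero]
    intro habs
    apply hj'
    have := h.symm.trans habs
    have hlen := congrArg List.length this
    simp only [List.length_append, List.length_replicate] at hlen
    omega
  · intro habs
    exact absurd (Finset.mem_range.mpr (by omega)) habs

/-- The product of the truncated expansions over a list of (generator, exponent, target). -/
noncomputable def PM (q : List (Fin n × ℕ × ℕ)) : A p n L :=
  (q.map fun x => Xmat p n L x.1 x.2.1).prod

lemma PM_nil : PM p n L [] = 1 := by rw [PM]; simp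

lemma PM_cons (c : Fin n × ℕ × ℕ) (q : List (Fin n × ℕ × ℕ)) :
    PM p n L (c :: q) = Xmat p n L c.1 c.2.1 * PM p n L q := by
  rw [PM, PM, List.map_cons, List.prod_cons]

lemma PM_support : ∀ (q : List (Fin n × ℕ × ℕ)) (u : V n L),
    PM p n L q u (eps n L) ≠ 0 →
    ∃ js : List ℕ, js.length = q.length ∧ u.val = expnd (q.map Prod.fst) js := by
  intro q
  induction q with
  | nil =>
    intro u h
    rw [PM_nil, Matrix.one_apply] at h
    have : u = eps n L := by by_contra hne; exact h (if_neg hne)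
    exact ⟨[], rfl, by rw [this]; rfl⟩
  | cons c q ih =>
    intro u h
    rw [PM_cons, Matrix.mul_apply] at h
    obtain ⟨w, _, hw⟩ := Finset.exists_ne_zero_of_sum_ne_zero h
    have h1 : Xmat p n L c.1 c.2.1 u w ≠ 0 := fun h0 => hw (by rw [h0, zero_mul])
    have h2 : PM p n L q w (eps n L) ≠ 0 := fun h0 => hw (by rw [h0, mul_zero])
    obtain ⟨j, hj⟩ := Xmat_ne_zero_exists p n L h1
    obtain ⟨js, hlen, hjs⟩ := ih w h2
    exact ⟨j :: js, by simp [hlen], by rw [List.map_cons, expnd_cons, ← hjs, hj]⟩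

lemma PM_entry : ∀ (q : List (Fin n × ℕ × ℕ)),
    List.IsChain (· ≠ ·) (q.map Prod.fst) → (∀ x ∈ q, 1 ≤ x.2.2) →
    ∀ (u : V n L), u.val = expnd (q.map Prod.fst) (q.map fun x => x.2.2) →
    PM p n L q u (eps n L) = (q.map fun x => (x.2.1.choose x.2.2 : ZMod p)).prod := by
  intro q
  induction q with
  | nil =>
    intro _ _ u hu
    have : u = eps n L := Subtype.ext (by simpa [eps] using hu)
    rw [PM_nil, this, Matrix.one_apply, if_pos rfl, List.map_nil, List.prod_nil]
  | cons c q ih =>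
    intro hchain hpos u hu
    obtain ⟨i, M, a⟩ := c
    rw [List.map_cons, List.map_cons, expnd_cons] at hu
    have ha1 : 1 ≤ a := hpos _ (List.mem_cons_self)
    have huL := u.2
    have hrest : (expnd (q.map Prod.fst) (q.map fun x => x.2.2)).length ≤ L := by
      rw [hu] at huL
      simp only [List.length_append] at huL
      omega
    set u' : V n L := ⟨expnd (q.map Prod.fst) (q.map fun x => x.2.2), hrest⟩ with hu'def
    have haL : a ≤ L := by
      rw [hu] at huL
      simp only [List.length_append, List.length_replicate] at huL
      omega
    rw [PM_cons, Matrix.mul_apply]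
    rw [Finset.sum_eq_single u']
    · rw [Xmat_apply_eq p n L i M u u' a haL (by rw [hu]),
        ih hchain.tail (fun x hx => hpos x (List.mem_cons_of_mem _ hx)) u' rfl,
        List.map_cons, List.prod_cons]
    · intro w _ hwne
      rcases eq_or_ne (PM p n L q w (eps n L)) 0 with h0 | h0
      · rw [h0, mul_zero]
      · obtain ⟨js, hlen, hjs⟩ := PM_support p n L q w h0
        have : Xmat p n L i M u w = 0 := by
          by_contra hX
          obtain ⟨j, hj⟩ := Xmat_ne_zero_exists p n L hX
          have heq : expnd ((i, M, a).1 :: q.map Prod.fst) (j :: js)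
              = expnd ((i, M, a).1 :: q.map Prod.fst) (a :: q.map fun x => x.2.2) := by
            rw [expnd_cons, expnd_cons, ← hjs, ← hj, ← hu]
          have huniq := expnd_unique ((i, M, a).1 :: q.map Prod.fst) (j :: js)
            (a :: q.map fun x => x.2.2)
            (by simp [hlen]) (by simp) (by exact hchain)
            (by
              intro y hy
              rcases List.mem_cons.mp hy with rfl | hy2
              · exact ha1
              · obtain ⟨x, hx, rfl⟩ := List.mem_map.mp hy2
                exact hpos x (List.mem_cons_of_mem _ hx))
            heq
          have : js = q.map fun x => x.2.2 := by
            injection huniq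
          exact hwne (Subtype.ext (by rw [hjs, this]))
        rw [this, zero_mul]
    · intro habs
      exact absurd (Finset.mem_univ u') habs

end Entry
section Extra
lemma reduced_chain {α : Type*} [DecidableEq α] :
    ∀ (l : List (α × Bool)), FreeGroup.reduce l = l →
      List.IsChain (fun a b : α × Bool => a.1 = b.1 → a.2 = b.2) l := by
  intro l
  induction l with
  | nil => simp
  | cons a l ih =>
    intro h
    rw [FreeGroup.reduce.cons] at h
    rcases hr : FreeGroup.reduce l with _ | ⟨hd, tl⟩
    · rw [hr] at h
      simp only at h
      have : l = [] := by
        cases l with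
        | nil => rfl
        | cons b t => simp at h
      subst this
      simp
    · rw [hr] at h
      simp only at h
      by_cases hc : a.1 = hd.1 ∧ a.2 = !hd.2
      · rw [if_pos hc] at h
        exfalso
        have hlen1 : (FreeGroup.reduce l).length ≤ l.length :=
          FreeGroup.Red.length_le (FreeGroup.reduce.red)
        have := congrArg List.length h
        rw [hr] at hlen1
        simp at this hlen1
        omega
      · rw [if_neg hc] at h
        have htl : l = hd :: tl := by
          injection h with h1 h2
          exact h2.symm
        have hred : FreeGroup.reduce l = l := by rw [hr, htl]
        have hchain := ih hred
        rw [htl]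
        apply List.IsChain.cons_cons
        · intro h1
          by_contra h2
          apply hc
          constructor
          · exact h1
          · cases ha : a.2 <;> cases hb : hd.2 <;> simp_all
        · rw [← htl]; exact hchain

lemma prod_runs_aux {α : Type*} {M : Type*} [Monoid M] (h : α → M) :
    ∀ rs : List (α × ℕ),
      ((rs.flatMap fun x => List.replicate x.2 x.1).map h).prod
        = (rs.map fun x => h x.1 ^ x.2).prod := by
  intro rs
  induction rs with
  | nil => simp
  | cons c rs ih =>
    simp only [List.flatMap_cons, List.map_append, List.prod_append, ih, List.map_cons,
      List.prod_cons, List.map_replicate, List.prod_replicate]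

lemma expnd_length {α : Type*} [DecidableEq α] :
    ∀ (gs : List α) (as : List ℕ), as.length = gs.length →
      (expnd gs as).length = as.sum := by
  intro gs
  induction gs with
  | nil =>
    intro as h
    obtain rfl : as = [] := List.length_eq_zero_iff.mp (by simpa using h)
    rfl
  | cons g gs ih =>
    intro as h
    rcases as with _ | ⟨a, as⟩
    · simp at h
    · rw [show expnd (g::gs) (a::as) = List.replicate a g ++ expnd gs as from rfl, List.length_append, List.length_replicate,
        ih as (by simpa using h), List.sum_cons]


lemma length_bind'' {α β : Type*} (l : List α) (f : α → List β) :
    (l.flatMap f).length = (l.map fun a => (f a).length).sum := by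
  induction l with
  | nil => rfl
  | cons a l ih => simp only [List.flatMap_cons, List.length_append, ih, List.map_cons, List.sum_cons]

end Extra

section Assembly
variable (p : ℕ) [hp : Fact p.Prime] (n L : ℕ)

lemma Egen_nl (i : Fin n) : Nl p n L (Egen p n L i) := by
  intro u v h
  rw [Egen, Em_apply] at h
  by_cases h2 : u.val = [i] ++ v.val
  · rw [h2]; simp
  · rw [if_neg h2] at h; exact absurd rfl h

noncomputable def uT (i : Fin n) : (A p n L)ˣ :=
  ⟨1 + Egen p n L i, sGeom p n L (Egen p n L i),
    mul_sGeom p n L (Egen_nl p n L i), sGeom_mul p n L (Egen_nl p n L i)⟩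

lemma uT_mem (i : Fin n) : uT p n L i ∈ UU p n L := by
  show Nl p n L ((1 + Egen p n L i) - 1)
  rw [add_sub_cancel_left]
  exact Egen_nl p n L i

lemma uT_order (i : Fin n) : (uT p n L i) ^ (p ^ (L + 1)) = 1 := by
  apply Units.ext
  rw [Units.val_pow_eq_pow_val]
  exact unipotent_pow_eq_one p n L (Egen_nl p n L i)

lemma uT_inv_pow (i : Fin n) (m : ℕ) :
    ((uT p n L i)⁻¹) ^ m = (uT p n L i) ^ (m * (p ^ (L + 1) - 1)) := by
  rw [inv_pow]
  apply inv_eq_of_mul_eq_one_right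
  rw [← pow_add]
  have hX : 1 ≤ p ^ (L + 1) := Nat.one_le_pow _ _ hp.out.pos
  have harith : m + m * (p ^ (L + 1) - 1) = p ^ (L + 1) * m := by
    obtain ⟨k, hk⟩ := Nat.exists_eq_add_of_le hX
    rw [hk, Nat.add_sub_cancel_left]
    ring
  rw [harith, pow_mul, uT_order, one_pow]

end Assembly

end StmtNine

open StmtNine List in
/-- No nontrivial group law holds in all finite p-groups: for every prime p and every
nontrivial element w of a free group, there is a finite p-group P and a homomorphism of the
free group to P under which the image of w is nontrivial.  Consequently, a variety of groups
containing all finite p-groups satisfies no nontrivial law, i.e. is the variety of all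
groups. -/
theorem stmt_9 (p : ℕ) (hp : p.Prime) (n : ℕ) (w : FreeGroup (Fin n)) (hw : w ≠ 1) :
    ∃ (P : Type) (_ : Group P) (_ : Finite P), IsPGroup p P ∧
      ∃ f : FreeGroup (Fin n) →* P, f w ≠ 1 := by
  haveI : Fact p.Prime := ⟨hp⟩
  set ω : List (Fin n × Bool) := w.toWord with hω
  set L : ℕ := ω.length with hL
  have hωne : ω ≠ [] := fun h => hw (FreeGroup.toWord_eq_nil_iff.mp h)
  -- the group
  refine ⟨UU p n L, inferInstance, ?_, ?_, ?_⟩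
  · infer_instance
  · -- p-group
    intro x
    refine ⟨L + 1, ?_⟩
    have hx : Nl p n L (((x : (A p n L)ˣ) : A p n L) - 1) := x.2
    apply Subtype.ext
    rw [SubmonoidClass.coe_pow]
    apply Units.ext
    rw [Units.val_pow_eq_pow_val]
    have hval : ((x : (A p n L)ˣ) : A p n L)
        = 1 + (((x : (A p n L)ˣ) : A p n L) - 1) := by noncomm_ring
    rw [hval]
    exact unipotent_pow_eq_one p n L hx
  · -- the homomorphism
    set F : FreeGroup (Fin n) →* (A p n L)ˣ := FreeGroup.lift (fun i => uT p n L i) with hF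
    set G : FreeGroup (Fin n) →* (UU p n L) :=
      FreeGroup.lift (fun i => ⟨uT p n L i, uT_mem p n L i⟩) with hG
    have hFG : ((UU p n L).subtype.comp G) w = F w := by
      refine DFunLike.congr_fun (FreeGroup.ext_hom _ _ fun a => ?_) w
      rw [MonoidHom.comp_apply, hF, hG, FreeGroup.lift_apply_of, FreeGroup.lift_apply_of]
      rfl
    refine ⟨G, ?_⟩
    -- the run data
    set Mex : (Fin n × Bool) × ℕ → ℕ := fun x => cond x.1.2 x.2 (x.2 * (p ^ (L + 1) - 1))
      with hMex
    set rs : List ((Fin n × Bool) × ℕ) := runs ω with hrs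
    set q : List (Fin n × ℕ × ℕ) :=
      rs.map fun x => (x.1.1, Mex x, p ^ padicValNat p (Mex x)) with hq
    have hp2 : 2 ≤ p ^ (L + 1) := by
      calc 2 ≤ p := hp.two_le
      _ = p ^ 1 := (pow_one p).symm
      _ ≤ p ^ (L + 1) := Nat.pow_le_pow_right hp.pos (by omega)
    have hrs_pos : ∀ x ∈ rs, 1 ≤ x.2 := runs_pos ω
    have hMex_pos : ∀ x ∈ rs, Mex x ≠ 0 := by
      intro x hx
      have h1 := hrs_pos x hx
      rw [hMex]
      cases hb : x.1.2 <;> simp only [hb, cond_true, cond_false]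
      · exact Nat.mul_ne_zero (by omega) (by omega)
      · omega
    have hval_le : ∀ x ∈ rs, p ^ padicValNat p (Mex x) ≤ x.2 := by
      intro x hx
      have h1 := hrs_pos x hx
      have hkey : padicValNat p (Mex x) = padicValNat p x.2 := by
        rw [hMex]
        cases hb : x.1.2 <;> simp only [hb, cond_true, cond_false]
        · have hnd : ¬ p ∣ (p ^ (L + 1) - 1) := by
            intro hdvd
            have h2 : p ∣ p ^ (L + 1) := dvd_pow_self p (Nat.succ_ne_zero L)
            have h3 : p ∣ p ^ (L + 1) - (p ^ (L + 1) - 1) := Nat.dvd_sub h2 hdvd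
            rw [Nat.sub_sub_self (by omega)] at h3
            have := Nat.le_of_dvd one_pos h3
            have := hp.two_le
            omega
          rw [padicValNat.mul (by omega) (by omega),
            padicValNat.eq_zero_of_not_dvd hnd, Nat.add_zero]
      rw [hkey]
      exact Nat.le_of_dvd (by omega) pow_padicValNat_dvd
    -- chains
    have hchainω : IsChain (fun a b : Fin n × Bool => a.1 = b.1 → a.2 = b.2) ω :=
      reduced_chain ω (FreeGroup.reduce_toWord w)
    have hchain_rs : IsChain (fun x y : (Fin n × Bool) × ℕ => x.1.1 ≠ y.1.1) rs := by
      apply (runs_chain ω hchainω).imp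
      intro x y hxy
      intro hEq
      exact hxy.1 (Prod.ext hEq (hxy.2 hEq))
    have hchain_q : IsChain (· ≠ ·) (q.map Prod.fst) := by
      rw [hq, List.map_map]
      exact (List.isChain_map _).mpr hchain_rs
    -- the target word
    have hsum : ((rs.map fun x : (Fin n × Bool) × ℕ => x.2).sum = L) := by
      conv_rhs => rw [hL, ← runs_join ω]
      rw [length_bind'', ← hrs]
      congr 1
      apply List.map_congr_left
      intro x _
      simp
    have hqlen : (q.map fun x : Fin n × ℕ × ℕ => x.2.2).length = (q.map Prod.fst).length := by
      simp
    have htlen : (expnd (q.map Prod.fst) (q.map fun x : Fin n × ℕ × ℕ => x.2.2)).length ≤ L := by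
      rw [expnd_length _ _ hqlen, hq, List.map_map]
      calc (rs.map fun x => p ^ padicValNat p (Mex x)).sum
          ≤ (rs.map fun x : (Fin n × Bool) × ℕ => x.2).sum := List.sum_le_sum hval_le
        _ = L := hsum
    set u : V n L := ⟨expnd (q.map Prod.fst) (q.map fun x : Fin n × ℕ × ℕ => x.2.2), htlen⟩
      with hu
    have hqpos : ∀ x ∈ q, 1 ≤ x.2.2 := by
      intro x hx
      rw [hq] at hx
      obtain ⟨y, hy, rfl⟩ := List.mem_map.mp hx
      exact Nat.one_le_pow _ _ hp.pos
    have hentry : PM p n L q u (eps n L)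
        = (q.map fun x : Fin n × ℕ × ℕ => (x.2.1.choose x.2.2 : ZMod p)).prod :=
      PM_entry p n L q hchain_q hqpos u rfl
    have hne0 : (q.map fun x : Fin n × ℕ × ℕ => (x.2.1.choose x.2.2 : ZMod p)).prod ≠ 0 := by
      apply List.prod_ne_zero
      intro h0
      obtain ⟨x, hx, hx0⟩ := List.mem_map.mp h0
      rw [hq] at hx
      obtain ⟨y, hy, rfl⟩ := List.mem_map.mp hx
      exact lucas_key p (hMex_pos y hy) hx0
    -- u is not the empty word
    have hune : u ≠ eps n L := by
      intro hEq
      have h1 : u.val.length = (q.map fun x : Fin n × ℕ × ℕ => x.2.2).sum :=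
        expnd_length _ _ hqlen
      have hrsne : rs ≠ [] := by
        intro h2
        apply hωne
        rw [← runs_join ω, ← hrs, h2]
        rfl
      have hqne : q ≠ [] := by
        rw [hq]
        simpa using hrsne
      rcases q with _ | ⟨z, q'⟩
      · exact hqne rfl
      · have hz := hqpos z (List.mem_cons_self)
        rw [hEq] at h1
        simp only [List.map_cons, List.sum_cons] at h1
        have : (0 : ℕ) = z.2.2 + (q'.map fun x : Fin n × ℕ × ℕ => x.2.2).sum := by
          simpa [eps] using h1
        omega
    -- the matrix computation
    have hw1 : F w = (ω.map fun x => cond x.2 (uT p n L x.1) (uT p n L x.1)⁻¹).prod := by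
      conv_lhs => rw [← FreeGroup.mk_toWord (x := w)]
      exact FreeGroup.lift_mk
    have hw2 : F w = (rs.map fun x => uT p n L x.1.1 ^ Mex x).prod := by
      rw [hw1]
      have haux := prod_runs_aux (fun x : Fin n × Bool => cond x.2 (uT p n L x.1) (uT p n L x.1)⁻¹) rs
      rw [hrs, runs_join ω] at haux
      rw [haux, ← hrs]
      congr 1
      apply List.map_congr_left
      intro x _
      rw [hMex]
      cases hb : x.1.2 <;> simp only [hb, cond_true, cond_false]
      · exact uT_inv_pow p n L x.1.1 x.2
    have hw3 : ((F w : (A p n L)ˣ) : A p n L) = PM p n L q := by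
      rw [hw2]
      have hco : ((((rs.map fun x => uT p n L x.1.1 ^ Mex x).prod) : (A p n L)ˣ) : A p n L)
          = ((rs.map fun x => uT p n L x.1.1 ^ Mex x).map (Units.coeHom (A p n L))).prod :=
        map_list_prod (Units.coeHom (A p n L)) _
      rw [hco, PM, hq, List.map_map, List.map_map]
      congr 1
      apply List.map_congr_left
      intro x _
      show ((uT p n L x.1.1 ^ Mex x : (A p n L)ˣ) : A p n L) = Xmat p n L x.1.1 (Mex x)
      rw [Units.val_pow_eq_pow_val]
      exact one_add_pow_eq_Xmat p n L x.1.1 (Mex x)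
    -- conclusion
    intro hGw
    have hFw : F w = 1 := by
      rw [← hFG, MonoidHom.comp_apply, hGw, map_one]
    have h1 : ((F w : (A p n L)ˣ) : A p n L) = 1 := by rw [hFw, Units.val_one]
    rw [hw3] at h1
    rw [h1, Matrix.one_apply, if_neg hune] at hentry
    exact hne0 hentry.symm
end

section
/- (Kaloujnine–Krasner) Let N and Q be groups and let G be any extension of N by Q, i.e. there is a short exact sequence 1 → N → G → Q → 1. Then G embeds into the regular wreath product N ≀ Q. -/
/-- Kaloujnine–Krasner: if 1 → N → G → Q → 1 is a short exact sequence of groups, then G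
embeds in the regular wreath product of N by Q. -/
theorem stmt_11 (N G Q : Type*) [Group N] [Group G] [Group Q]
    (ι : N →* G) (π : G →* Q) (hι : Function.Injective ι) (hπ : Function.Surjective π)
    (hexact : ι.range = π.ker) :
    ∃ f : G →* Wr N Q, Function.Injective f := by
  classical
  obtain ⟨s, hs⟩ : ∃ s : Q → G, ∀ q, π (s q) = q :=
    ⟨Function.surjInv hπ, Function.surjInv_eq hπ⟩
  set ν : G → N := Function.invFun ι with hν
  have hιν : ∀ x, π x = 1 → ι (ν x) = x := by
    intro x hx
    have hx' : x ∈ ι.range := by rw [hexact]; exact hx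
    obtain ⟨n, rfl⟩ := hx'
    rw [hν, Function.leftInverse_invFun hι]
  have hker : ∀ (g : G) (q : Q), π (s q * g * (s (q * π g))⁻¹) = 1 := by
    intro g q; rw [map_mul, map_mul, map_inv, hs, hs]; group
  set φ : G → Q → N := fun g q => ν (s q * g * (s (q * π g))⁻¹) with hφdef
  have hφ : ∀ g q, ι (φ g q) = s q * g * (s (q * π g))⁻¹ := fun g q => hιν _ (hker g q)
  refine ⟨MonoidHom.mk' (fun g => ⟨φ g, π g⟩) ?_, ?_⟩
  · intro g h
    refine SemidirectProduct.ext ?_ ?_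
    · funext q
      apply hι
      show ι (φ (g * h) q) = ι (φ g q * ((wrAut N Q) (π g) (φ h)) q)
      rw [map_mul]
      show ι (φ (g * h) q) = ι (φ g q) * ι (φ h (q * π g))
      rw [hφ, hφ, hφ, map_mul]
      group
    · exact map_mul π g h
  · intro a b hab
    have h1 : π a = π b := congrArg SemidirectProduct.right hab
    have h2 : φ a 1 = φ b 1 := congrFun (congrArg SemidirectProduct.left hab) 1
    have h3 := congrArg ι h2
    rw [hφ, hφ, h1] at h3
    exact mul_left_cancel (mul_right_cancel h3)
end

section
/- Let S be a nonabelian simple group and let I be a finite set. Every normal subgroup of the direct power S^I is the product of the coordinate subgroups S_j for j in some subset J ⊆ I. -/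
/-- Every normal subgroup of a finite direct power of a nonabelian simple group S is the
product of the coordinate subgroups indexed by some subset J, i.e. consists of the tuples
that are trivial outside J. -/
theorem stmt_13 (S : Type*) [Group S] (hS : IsSimpleGroup S)
    (hna : ∃ a b : S, a * b ≠ b * a) (I : Type*) [Finite I]
    (K : Subgroup (I → S)) (hK : K.Normal) :
    ∃ J : Set I, K = Subgroup.pi Jᶜ (fun _ => (⊥ : Subgroup S)) := by
  classical
  cases nonempty_fintype I
  obtain ⟨a0, b0, hab⟩ := hna
  -- center of S is trivial
  have hcenter : Subgroup.center S = ⊥ := by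
    rcases hS.eq_bot_or_eq_top_of_normal (Subgroup.center S)
        inferInstance with h | h
    · exact h
    · exfalso
      apply hab
      have : a0 ∈ Subgroup.center S := h ▸ Subgroup.mem_top a0
      exact (Subgroup.mem_center_iff.mp this b0).symm
  set J : Set I := {i | ∃ x ∈ K, x i ≠ 1} with hJ
  refine ⟨J, ?_⟩
  have key : ∀ j ∈ J, ∀ s : S, Pi.mulSingle j s ∈ K := by
    rintro j ⟨x, hx, hxj⟩ s
    set N : Subgroup S := K.comap (MonoidHom.mulSingle (fun _ : I => S) j) with hN
    have hNnormal : N.Normal := hK.comap _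
    -- find a nontrivial element of N
    have hxc : x j ∉ Subgroup.center S := by
      rw [hcenter]; simpa using hxj
    obtain ⟨a, ha⟩ : ∃ a : S, ¬ a * x j = x j * a := by
      by_contra h
      push_neg at h
      exact hxc (Subgroup.mem_center_iff.mpr h)
    have hcomm : x j * a * (x j)⁻¹ * a⁻¹ ∈ N := by
      have h1 : x * Pi.mulSingle j a * x⁻¹ * (Pi.mulSingle j a)⁻¹ ∈ K := by
        have h2 : Pi.mulSingle j a * x⁻¹ * (Pi.mulSingle j a)⁻¹ ∈ K :=
          hK.conj_mem _ (K.inv_mem hx) _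
        have := K.mul_mem hx h2
        simpa [mul_assoc] using this
      have heq : x * Pi.mulSingle j a * x⁻¹ * (Pi.mulSingle j a)⁻¹
          = Pi.mulSingle j (x j * a * (x j)⁻¹ * a⁻¹) := by
        funext i
        by_cases hij : i = j
        · subst hij; simp [Pi.mulSingle_apply]
        · simp [Pi.mulSingle_apply, hij]
      rw [hN, Subgroup.mem_comap]
      simpa [MonoidHom.mulSingle_apply, ← heq] using h1
    have hNne : N ≠ ⊥ := by
      intro hbot
      rw [hbot, Subgroup.mem_bot] at hcomm
      have h1 : x j * a * (x j)⁻¹ = a := by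
        have := mul_eq_one_iff_eq_inv.mp hcomm
        simpa using this
      exact ha (mul_inv_eq_iff_eq_mul.mp h1).symm
    have hNtop : N = ⊤ := (hS.eq_bot_or_eq_top_of_normal N hNnormal).resolve_left hNne
    have : s ∈ N := hNtop ▸ Subgroup.mem_top s
    simpa [hN, Subgroup.mem_comap, MonoidHom.mulSingle_apply] using this
  ext y
  simp only [Subgroup.mem_pi, Subgroup.mem_bot, Set.mem_compl_iff]
  constructor
  · intro hy i hi
    by_contra hne
    exact hi ⟨y, hy, hne⟩
  · intro hy
    rw [← Finset.noncommProd_mulSingle y]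
    refine Subgroup.noncommProd_mem K _ fun i _ => ?_
    by_cases hi : i ∈ J
    · exact key i hi (y i)
    · have : y i = 1 := hy i hi
      rw [this]
      simpa using K.one_mem
end

section
/- Let G be a group, N a solvable normal subgroup of G, and H a subgroup with NH = G. Let N = N_0 ⊵ N_1 ⊵ ... ⊵ N_m = {e} be the derived series of N (so each N_i is normal in G). If k is an index with N_k H = G and N_{k+1} H ≠ G, then setting H* = N_{k+1}H and M = N_k ∩ H*, the subgroup M is normal in G, and the quotient G/M is an (internal) semidirect product of the image of N_k by the image of H*. -/
open scoped commutatorElement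

private lemma aux_map_derived_normal {G : Type*} [Group G] {N : Subgroup G} (hN : N.Normal)
    (k : ℕ) : (Subgroup.map N.subtype (derivedSeries ↥N k)).Normal := by
  induction k with
  | zero =>
      rw [derivedSeries_zero, ← MonoidHom.range_eq_map, Subgroup.range_subtype]
      exact hN
  | succ n ih =>
      rw [derivedSeries_succ, Subgroup.map_commutator]
      exact @Subgroup.commutator_normal G _ _ _ ih ih

/-- Let N be a solvable normal subgroup of G and H a subgroup with NH = G.  Writing N_i for
the terms of the derived series of N (each normal in G), suppose k is an index with
N_k H = G and N_{k+1} H ≠ G.  Set H* = N_{k+1}H and M = N_k ∩ H*.  Then M is normal in G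
and the quotient G/M is the internal semidirect product of the image of N_k by the image
of H*: the image of N_k is normal, the two images intersect trivially, and together they
generate G/M. -/
theorem stmt_15 (G : Type*) [Group G] (N H : Subgroup G) (hN : N.Normal)
    (hsolv : IsSolvable ↥N) (hNH : N ⊔ H = ⊤) (k : ℕ)
    (hk : Subgroup.map N.subtype (derivedSeries ↥N k) ⊔ H = ⊤)
    (hk1 : Subgroup.map N.subtype (derivedSeries ↥N (k + 1)) ⊔ H ≠ ⊤) :
    ∃ hM : ((Subgroup.map N.subtype (derivedSeries ↥N k)) ⊓
        (Subgroup.map N.subtype (derivedSeries ↥N (k + 1)) ⊔ H)).Normal,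
      haveI := hM
      (Subgroup.map
          (QuotientGroup.mk' ((Subgroup.map N.subtype (derivedSeries ↥N k)) ⊓
            (Subgroup.map N.subtype (derivedSeries ↥N (k + 1)) ⊔ H)))
          (Subgroup.map N.subtype (derivedSeries ↥N k))).Normal ∧
      (Subgroup.map
          (QuotientGroup.mk' ((Subgroup.map N.subtype (derivedSeries ↥N k)) ⊓
            (Subgroup.map N.subtype (derivedSeries ↥N (k + 1)) ⊔ H)))
          (Subgroup.map N.subtype (derivedSeries ↥N k))) ⊓
        (Subgroup.map
          (QuotientGroup.mk' ((Subgroup.map N.subtype (derivedSeries ↥N k)) ⊓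
            (Subgroup.map N.subtype (derivedSeries ↥N (k + 1)) ⊔ H)))
          (Subgroup.map N.subtype (derivedSeries ↥N (k + 1)) ⊔ H)) = ⊥ ∧
      (Subgroup.map
          (QuotientGroup.mk' ((Subgroup.map N.subtype (derivedSeries ↥N k)) ⊓
            (Subgroup.map N.subtype (derivedSeries ↥N (k + 1)) ⊔ H)))
          (Subgroup.map N.subtype (derivedSeries ↥N k))) ⊔
        (Subgroup.map
          (QuotientGroup.mk' ((Subgroup.map N.subtype (derivedSeries ↥N k)) ⊓
            (Subgroup.map N.subtype (derivedSeries ↥N (k + 1)) ⊔ H)))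
          (Subgroup.map N.subtype (derivedSeries ↥N (k + 1)) ⊔ H)) = ⊤ := by
  set Nk := Subgroup.map N.subtype (derivedSeries ↥N k) with hNk
  set Nk1 := Subgroup.map N.subtype (derivedSeries ↥N (k + 1)) with hNk1
  set Hs := Nk1 ⊔ H with hHs
  set M := Nk ⊓ Hs with hMdef
  have hNkn : Nk.Normal := aux_map_derived_normal hN k
  have hNk1n : Nk1.Normal := aux_map_derived_normal hN (k + 1)
  have hcomm : ⁅Nk, Nk⁆ = Nk1 := by
    rw [hNk, hNk1, derivedSeries_succ, Subgroup.map_commutator]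
  have hsub : Nk1 ≤ Nk := hcomm ▸ Subgroup.commutator_le_left Nk Nk
  have htop : Nk ⊔ Hs = ⊤ := by
    rw [hHs, ← sup_assoc, sup_of_le_left hsub, hk]
  -- conjugation by elements of Nk preserves M
  have hconjN : ∀ n ∈ Nk, ∀ m ∈ M, n * m * n⁻¹ ∈ M := by
    intro n hn m hm
    refine ⟨Nk.mul_mem (Nk.mul_mem hn hm.1) (Nk.inv_mem hn), ?_⟩
    have h1 : ⁅n, m⁆ ∈ Nk1 := hcomm ▸ Subgroup.commutator_mem_commutator hn hm.1
    have h2 : n * m * n⁻¹ = ⁅n, m⁆ * m := by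
      rw [commutatorElement_def]; group
    rw [h2]
    exact mul_mem (Subgroup.mem_sup_left h1) hm.2
  have hconjH : ∀ h ∈ Hs, ∀ m ∈ M, h * m * h⁻¹ ∈ M := by
    intro h hh m hm
    exact ⟨hNkn.conj_mem m hm.1 h, Hs.mul_mem (Hs.mul_mem hh hm.2) (Hs.inv_mem hh)⟩
  have hM : M.Normal := by
    rw [← Subgroup.normalizer_eq_top_iff, eq_top_iff, ← htop]
    refine sup_le ?_ ?_ <;> intro g hg <;> rw [Subgroup.mem_normalizer_iff] <;> intro m
    · constructor
      · intro hm; exact hconjN g hg m hm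
      · intro hm
        have := hconjN g⁻¹ (inv_mem hg) _ hm
        simpa [mul_assoc] using this
    · constructor
      · intro hm; exact hconjH g hg m hm
      · intro hm
        have := hconjH g⁻¹ (inv_mem hg) _ hm
        simpa [mul_assoc] using this
  refine ⟨hM, ?_, ?_, ?_⟩
  · exact hNkn.map _ (QuotientGroup.mk'_surjective M)
  · rw [eq_bot_iff]
    rintro x ⟨⟨a, ha, rfl⟩, ⟨b, hb, hab⟩⟩
    have : (QuotientGroup.mk' M) (a⁻¹ * b) = 1 := by
      rw [map_mul, map_inv, hab, inv_mul_cancel]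
    have hz : a⁻¹ * b ∈ M := (QuotientGroup.eq_one_iff _).mp this
    have haHs : a ∈ Hs := by
      have : a = b * (a⁻¹ * b)⁻¹ := by group
      rw [this]
      exact mul_mem hb (inv_mem hz.2)
    rw [Subgroup.mem_bot, QuotientGroup.mk'_apply, QuotientGroup.eq_one_iff]
    exact ⟨ha, haHs⟩
  · rw [← Subgroup.map_sup, htop]
    exact Subgroup.map_top_of_surjective _ (QuotientGroup.mk'_surjective M)
end
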